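/- arXiv:0708.1487 — 2 statements merged into one kernel-verified Lean document; each statement's English description precedes it below -/
import Mathlib

section
/- Let (g, [,], δ) be a Lie bialgebra, i.e., δ: g → g ⊗ g satisfies the cocycle condition δ([a,b]) = [a⊗1 + 1⊗a, δ(b)] + [δ(a), b⊗1 + 1⊗b]. Then δ has degree 0 with respect to the lower central series filtration: δ(g_i) ⊆ ∑_{p+q=i} g_p ⊗ g_q, where g_0 = g and g_{i+1} = [g_i, g]. -/
open TensorProduct

namespace Stmt5

variable {g : Type*} [LieRing g] [LieAlgebra ℂ g]

/-- The adjoint action of `a ∈ g` on `g ⊗ g`, i.e. `⁅a ⊗ 1 + 1 ⊗ a, ·⁆` (the adjoint action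
on each tensor factor). -/
noncomputable def ad2 (a : g) : Module.End ℂ (g ⊗[ℂ] g) :=
  TensorProduct.map (LieAlgebra.ad ℂ g a) LinearMap.id +
    TensorProduct.map LinearMap.id (LieAlgebra.ad ℂ g a)

/-- The `i`-th term of the lower central series, as a ℂ-submodule of `g`. -/
noncomputable def lcs (i : ℕ) : Submodule ℂ g :=
  (LieModule.lowerCentralSeries ℂ g g i).toSubmodule

/-- The target filtration submodule. -/
noncomputable def T (i : ℕ) : Submodule ℂ (g ⊗[ℂ] g) :=
  ⨆ p ∈ Finset.Iic i,
    LinearMap.range (TensorProduct.mapIncl (lcs (g := g) p) (lcs (g := g) (i - p)))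

lemma lcs_antitone : ∀ {p q : ℕ}, p ≤ q → lcs (g := g) q ≤ lcs (g := g) p := by
  intro p q hpq
  exact LieModule.antitone_lowerCentralSeries ℂ g g hpq

lemma bracket_mem_lcs_succ (a : g) {u : g} {p : ℕ} (hu : u ∈ lcs (g := g) p) :
    ⁅a, u⁆ ∈ lcs (g := g) (p + 1) := by
  rw [lcs, LieModule.lowerCentralSeries_succ]
  exact LieSubmodule.lie_mem_lie (LieSubmodule.mem_top a) hu

lemma bracket_mem_lcs_succ' {y : g} {n : ℕ} (hy : y ∈ lcs (g := g) n) (u : g) :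
    ⁅y, u⁆ ∈ lcs (g := g) (n + 1) := by
  have : ⁅y, u⁆ = -⁅u, y⁆ := by rw [lie_skew]
  rw [this]
  exact neg_mem (bracket_mem_lcs_succ u hy)

lemma tmul_mem_T {i p q : ℕ} (hpq : i ≤ p + q) {u v : g}
    (hu : u ∈ lcs (g := g) p) (hv : v ∈ lcs (g := g) q) :
    u ⊗ₜ[ℂ] v ∈ T (g := g) i := by
  set p' := min p i with hp'
  have hp'i : p' ≤ i := min_le_right p i
  have hu' : u ∈ lcs (g := g) p' := lcs_antitone (min_le_left p i) hu
  have hv' : v ∈ lcs (g := g) (i - p') := by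
    refine lcs_antitone ?_ hv
    omega
  have hmem : u ⊗ₜ[ℂ] v ∈
      LinearMap.range (TensorProduct.mapIncl (lcs (g := g) p') (lcs (g := g) (i - p'))) :=
    ⟨(⟨u, hu'⟩ : lcs (g := g) p') ⊗ₜ[ℂ] (⟨v, hv'⟩ : lcs (g := g) (i - p')), rfl⟩
  exact le_iSup₂ (f := fun p (_ : p ∈ Finset.Iic i) =>
      LinearMap.range (TensorProduct.mapIncl (lcs (g := g) p) (lcs (g := g) (i - p))))
    p' (Finset.mem_Iic.mpr hp'i) hmem

lemma ad2_tmul (a u v : g) :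
    ad2 a (u ⊗ₜ[ℂ] v) = ⁅a, u⁆ ⊗ₜ[ℂ] v + u ⊗ₜ[ℂ] ⁅a, v⁆ := by
  simp [ad2, TensorProduct.map_tmul, LieAlgebra.ad_apply]

lemma ad2_maps_T {i : ℕ} (a : g) {t : g ⊗[ℂ] g} (ht : t ∈ T (g := g) i) :
    ad2 a t ∈ T (g := g) (i + 1) := by
  rw [T, iSup_subtype'] at ht
  refine Submodule.iSup_induction _ (motive := fun t => ad2 a t ∈ T (g := g) (i + 1)) ht ?_ ?_ ?_
  · rintro ⟨p, hp⟩ t ht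
    simp only [Finset.mem_Iic] at hp
    obtain ⟨s, rfl⟩ := ht
    induction s using TensorProduct.induction_on with
    | zero => simpa using (T (g := g) (i + 1)).zero_mem
    | tmul u v =>
        obtain ⟨u, hu⟩ := u
        obtain ⟨v, hv⟩ := v
        have : TensorProduct.mapIncl (lcs (g := g) p) (lcs (g := g) (i - p))
            ((⟨u, hu⟩ : lcs (g := g) p) ⊗ₜ[ℂ] (⟨v, hv⟩ : lcs (g := g) (i - p)))
            = u ⊗ₜ[ℂ] v := rfl
        rw [this, ad2_tmul]
        refine add_mem (tmul_mem_T (p := p + 1) (q := i - p) (by omega)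
            (bracket_mem_lcs_succ a hu) hv)
          (tmul_mem_T (p := p) (q := i - p + 1) (by omega) hu
            (bracket_mem_lcs_succ a hv))
    | add s₁ s₂ h₁ h₂ =>
        rw [map_add, map_add]
        exact add_mem h₁ h₂
  · simpa using (T (g := g) (i + 1)).zero_mem
  · intro s t hs ht
    rw [map_add]
    exact add_mem hs ht

lemma ad2_lcs_maps {n : ℕ} {y : g} (hy : y ∈ lcs (g := g) n) (t : g ⊗[ℂ] g) :
    ad2 y t ∈ T (g := g) (n + 1) := by
  induction t using TensorProduct.induction_on with
  | zero => simpa using (T (g := g) (n + 1)).zero_mem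
  | tmul u v =>
      rw [ad2_tmul]
      refine add_mem (tmul_mem_T (p := n + 1) (q := 0) (by omega)
          (bracket_mem_lcs_succ' hy u) trivial)
        (tmul_mem_T (p := 0) (q := n + 1) (by omega) trivial
          (bracket_mem_lcs_succ' hy v))
  | add s₁ s₂ h₁ h₂ =>
      rw [map_add]
      exact add_mem h₁ h₂

/-- Let `(g, [,], δ)` be a Lie bialgebra, i.e. `δ : g → g ⊗ g` satisfies the
1-cocycle condition `δ([a,b]) = [a⊗1 + 1⊗a, δ(b)] + [δ(a), b⊗1 + 1⊗b]`. Then `δ` has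
degree 0 with respect to the lower central series filtration (`g_0 = g`,
`g_{i+1} = [g_i, g]`): `δ(g_i) ⊆ ∑_{p+q=i} g_p ⊗ g_q`. -/
theorem stmt5 (δ : g →ₗ[ℂ] g ⊗[ℂ] g)
    (hcocycle : ∀ a b : g, δ ⁅a, b⁆ = ad2 a (δ b) - ad2 b (δ a))
    (i : ℕ) (x : g) (hx : x ∈ lcs (g := g) i) :
    δ x ∈ ⨆ p ∈ Finset.Iic i,
      LinearMap.range (TensorProduct.mapIncl (lcs (g := g) p) (lcs (g := g) (i - p))) := by
  show δ x ∈ T (g := g) i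
  induction i generalizing x with
  | zero =>
      induction (δ x) using TensorProduct.induction_on with
      | zero => exact (T (g := g) 0).zero_mem
      | tmul u v => exact tmul_mem_T (p := 0) (q := 0) (by omega) trivial trivial
      | add s₁ s₂ h₁ h₂ => exact add_mem h₁ h₂
  | succ n ih =>
      have hx' : x ∈ Submodule.span ℂ
          { m : g | ∃ a ∈ (⊤ : LieIdeal ℂ g), ∃ y ∈ LieModule.lowerCentralSeries ℂ g g n,
            ⁅a, y⁆ = m } := by
        have h2 : x ∈ ⁅(⊤ : LieIdeal ℂ g), LieModule.lowerCentralSeries ℂ g g n⁆ := by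
          rw [← LieModule.lowerCentralSeries_succ]
          exact hx
        rwa [← LieSubmodule.mem_toSubmodule,
          LieSubmodule.lieIdeal_oper_eq_linear_span'] at h2
      refine Submodule.span_induction ?_ ?_ ?_ ?_ hx'
      · rintro m ⟨a, -, y, hy, rfl⟩
        rw [hcocycle a y]
        exact sub_mem (ad2_maps_T a (ih y hy)) (ad2_lcs_maps hy (δ a))
      · simpa using (T (g := g) (n + 1)).zero_mem
      · intro s t _ _ hs ht
        rw [map_add]
        exact add_mem hs ht
      · intro c s _ hs
        rw [map_smul]
        exact Submodule.smul_mem _ c hs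

end Stmt5
end

section
/- Let g be a finite-dimensional Lie algebra over ℂ and r ∈ g ⊗ g a skew-symmetric solution of the classical Yang–Baxter equation [r₁₂, r₁₃] + [r₁₂, r₂₃] + [r₁₃, r₂₃] = 0. Then the image of r, regarded as a linear map g* → g, is a Lie subalgebra of g. -/
open TensorProduct

namespace Stmt6

variable (g : Type*) [LieRing g] [LieAlgebra ℂ g]

/-- `U(g) ⊗ U(g) ⊗ U(g)`. -/
noncomputable abbrev U3 :=
  UniversalEnvelopingAlgebra ℂ g ⊗[ℂ] (UniversalEnvelopingAlgebra ℂ g ⊗[ℂ]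
    UniversalEnvelopingAlgebra ℂ g)

variable {g}

attribute [local instance] LieRing.ofAssociativeRing

/-- `x ↦ ι(x) ⊗ 1 ⊗ 1 : g → U(g)^{⊗3}`. -/
noncomputable def j1 : g →ₗ[ℂ] U3 g :=
  (TensorProduct.mk ℂ (UniversalEnvelopingAlgebra ℂ g) _).flip (1 ⊗ₜ 1) ∘ₗ
    (UniversalEnvelopingAlgebra.ι ℂ : g →ₗ⁅ℂ⁆ _).toLinearMap

/-- `x ↦ 1 ⊗ ι(x) ⊗ 1 : g → U(g)^{⊗3}`. -/
noncomputable def j2 : g →ₗ[ℂ] U3 g :=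
  TensorProduct.mk ℂ (UniversalEnvelopingAlgebra ℂ g) _ 1 ∘ₗ
    (TensorProduct.mk ℂ (UniversalEnvelopingAlgebra ℂ g) _).flip 1 ∘ₗ
      (UniversalEnvelopingAlgebra.ι ℂ : g →ₗ⁅ℂ⁆ _).toLinearMap

/-- `x ↦ 1 ⊗ 1 ⊗ ι(x) : g → U(g)^{⊗3}`. -/
noncomputable def j3 : g →ₗ[ℂ] U3 g :=
  TensorProduct.mk ℂ (UniversalEnvelopingAlgebra ℂ g) _ 1 ∘ₗ
    TensorProduct.mk ℂ (UniversalEnvelopingAlgebra ℂ g) _ 1 ∘ₗ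
      (UniversalEnvelopingAlgebra.ι ℂ : g →ₗ⁅ℂ⁆ _).toLinearMap

/-- The linear map `g ⊗ g → U(g)^{⊗3}` sending `x ⊗ y ↦ f(x) * f'(y)`. -/
noncomputable def legMap (f f' : g →ₗ[ℂ] U3 g) : g ⊗[ℂ] g →ₗ[ℂ] U3 g :=
  TensorProduct.lift ((LinearMap.mul ℂ (U3 g)).compl₁₂ f f')

/-- `r₁₂ ∈ U(g)^{⊗3}` for `r ∈ g ⊗ g`. -/
noncomputable def r12 (r : g ⊗[ℂ] g) : U3 g := legMap j1 j2 r

/-- `r₁₃ ∈ U(g)^{⊗3}` for `r ∈ g ⊗ g`. -/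
noncomputable def r13 (r : g ⊗[ℂ] g) : U3 g := legMap j1 j3 r

/-- `r₂₃ ∈ U(g)^{⊗3}` for `r ∈ g ⊗ g`. -/
noncomputable def r23 (r : g ⊗[ℂ] g) : U3 g := legMap j2 j3 r

/-- The classical Yang–Baxter equation, stated in `U(g)^{⊗3}`. -/
def CYBE (r : g ⊗[ℂ] g) : Prop :=
  ⁅r12 r, r13 r⁆ + ⁅r12 r, r23 r⁆ + ⁅r13 r, r23 r⁆ = 0

/-- The linear map `g* → g` induced by `r ∈ g ⊗ g`, `ξ ↦ (ξ ⊗ id)(r)`. -/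
noncomputable def rTilde (r : g ⊗[ℂ] g) (ξ : Module.Dual ℂ g) : g :=
  TensorProduct.lid ℂ g (TensorProduct.map ξ LinearMap.id r)

end Stmt6

namespace PBWlite


variable {g : Type*} [LieRing g] [LieAlgebra ℂ g] {n : ℕ}
abbrev PM (n : ℕ) : Type := Multiset (Fin n) →₀ ℂ
noncomputable def ee (M : Multiset (Fin n)) : PM n := Finsupp.single M 1
variable (b : Module.Basis (Fin n) ℂ g)

open scoped Classical in
noncomputable def fAux : ℕ → Fin n → Multiset (Fin n) → PM n
  | 0, _, _ => 0
  | (s+1), i, M =>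
    if ∀ j ∈ M, i ≤ j then Finsupp.single (i ::ₘ M) 1
    else
      match M.sort (· ≤ ·) with
      | [] => 0
      | j :: _ =>
        ((fAux s i (M.erase j)).sum fun N c =>
            if N.card ≤ M.card then c • fAux s j N else 0)
          + (b.repr ⁅b i, b j⁆).sum fun k c => c • fAux s k (M.erase j)

def rnk (i : Fin n) (M : Multiset (Fin n)) : ℕ := (n+1) * M.card + i

lemma sort_head_min {M : Multiset (Fin n)} {j : Fin n} {L : List (Fin n)}
    (h : M.sort (· ≤ ·) = j :: L) : j ∈ M ∧ ∀ k ∈ M, j ≤ k := by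
  have hs : (M.sort (· ≤ ·)).Pairwise (· ≤ ·) := Multiset.pairwise_sort _ _
  rw [h] at hs
  constructor
  · rw [← Multiset.mem_sort (· ≤ ·), h]; exact List.mem_cons_self
  · intro k hk
    rw [← Multiset.mem_sort (· ≤ ·), h] at hk
    rcases List.mem_cons.mp hk with rfl | hk
    · exact le_refl _
    · exact (List.pairwise_cons.mp hs).1 k hk

lemma sort_head_eq {M : Multiset (Fin n)} {j : Fin n} {L : List (Fin n)}
    (h : M.sort (· ≤ ·) = j :: L) {l : Fin n} (hl : l ∈ M) (hmin : ∀ k ∈ M, l ≤ k) :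
    j = l := by
  obtain ⟨hj, hjmin⟩ := sort_head_min h
  exact le_antisymm (hjmin l hl) (hmin j hj)

lemma sort_ne_nil {M : Multiset (Fin n)} (h : M ≠ 0) : M.sort (· ≤ ·) ≠ [] := by
  intro hc
  apply h
  have := Multiset.sort_eq M (· ≤ ·)
  rw [hc] at this
  simpa using this.symm

-- rank facts
lemma rnk_erase_lt {i k : Fin n} {M : Multiset (Fin n)} {j : Fin n} (hj : j ∈ M) :
    rnk k (M.erase j) < rnk i M := by
  unfold rnk
  have hc : (M.erase j).card + 1 = M.card := Multiset.card_erase_add_one hj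
  have hk : (k : ℕ) < n + 1 := lt_of_lt_of_le k.2 (Nat.le_succ n)
  nlinarith [i.2]

lemma rnk_lt_of_card_le {j i : Fin n} {N M : Multiset (Fin n)}
    (hc : N.card ≤ M.card) (hji : j < i) : rnk j N < rnk i M := by
  unfold rnk
  have := Nat.mul_le_mul_left (n+1) hc
  omega

/-- fuel stability -/
lemma fAux_stab : ∀ s t : ℕ, ∀ (i : Fin n) (M : Multiset (Fin n)),
    rnk i M < s → rnk i M < t → fAux b s i M = fAux b t i M := by
  intro s
  induction s using Nat.strong_induction_on with
  | _ s IH =>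
    intro t i M hs ht
    obtain ⟨s', rfl⟩ : ∃ s', s = s' + 1 := ⟨s - 1, by omega⟩
    obtain ⟨t', rfl⟩ : ∃ t', t = t' + 1 := ⟨t - 1, by omega⟩
    show fAux b (s'+1) i M = fAux b (t'+1) i M
    unfold fAux
    split
    · rfl
    · rename_i hcond
      rcases hsort : M.sort (· ≤ ·) with _ | ⟨j, L⟩
      · simp
      · simp only []
        obtain ⟨hjm, hjmin⟩ := sort_head_min hsort
        have hji : j < i := by
          push_neg at hcond
          obtain ⟨k, hk, hik⟩ := hcond
          exact lt_of_le_of_lt (hjmin k hk) hik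
        have hlt1 : rnk i (M.erase j) < rnk i M := rnk_erase_lt hjm
        have h1 : fAux b s' i (M.erase j) = fAux b t' i (M.erase j) :=
          IH s' (by omega) t' i (M.erase j) (by omega) (by omega)
        rw [h1]
        congr 1
        · apply Finsupp.sum_congr
          intro N _
          by_cases hN : N.card ≤ M.card
          · rw [if_pos hN, if_pos hN]
            have hlt : rnk j N < rnk i M := rnk_lt_of_card_le hN hji
            rw [IH s' (by omega) t' j N (by omega) (by omega)]
          · rw [if_neg hN, if_neg hN]
        · apply Finsupp.sum_congr
          intro k _
          have hlt : rnk k (M.erase j) < rnk i M := rnk_erase_lt hjm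
          rw [IH s' (by omega) t' k (M.erase j) (by omega) (by omega)]

/-- The PBW operator on basis monomials. -/
noncomputable def FF (i : Fin n) (M : Multiset (Fin n)) : PM n :=
  fAux b (rnk i M + 1) i M

lemma fAux_eq_FF {s : ℕ} {i : Fin n} {M : Multiset (Fin n)} (h : rnk i M < s) :
    fAux b s i M = FF b i M :=
  fAux_stab b s (rnk i M + 1) i M h (Nat.lt_succ_self _)

/-- Linear extension of `FF`. -/
noncomputable def AA (i : Fin n) : PM n →ₗ[ℂ] PM n :=
  Finsupp.linearCombination ℂ (FF b i)

/-- The candidate representation map. -/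
noncomputable def rho : g →ₗ[ℂ] Module.End ℂ (PM n) :=
  (Finsupp.linearCombination ℂ (AA b)).comp (b.repr : g ≃ₗ[ℂ] (Fin n →₀ ℂ)).toLinearMap

lemma AA_single {i : Fin n} {M : Multiset (Fin n)} {c : ℂ} :
    AA b i (Finsupp.single M c) = c • FF b i M := by
  simp [AA, Finsupp.linearCombination_single]

lemma AA_ee {i : Fin n} {M : Multiset (Fin n)} : AA b i (ee M) = FF b i M := by
  simp [ee, AA_single]

lemma AA_apply {i : Fin n} (p : PM n) : AA b i p = p.sum fun N c => c • FF b i N := by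
  simp [AA, Finsupp.linearCombination_apply]

lemma rho_apply (x : g) (p : PM n) :
    rho b x p = (b.repr x).sum fun k c => c • AA b k p := by
  simp only [rho, LinearMap.comp_apply, LinearEquiv.coe_coe]
  rw [Finsupp.linearCombination_apply, Finsupp.sum, Finsupp.sum, LinearMap.sum_apply]
  simp

lemma rho_basis (k : Fin n) : rho b (b k) = AA b k := by
  apply LinearMap.ext
  intro p
  rw [rho_apply]
  simp [Finsupp.sum_single_index]

lemma rho_ee (x : g) (M : Multiset (Fin n)) :
    rho b x (ee M) = (b.repr x).sum fun k c => c • FF b k M := by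
  rw [rho_apply]
  exact Finsupp.sum_congr fun k _ => by rw [AA_ee]

lemma fAux_support : ∀ (s : ℕ) (i : Fin n) (M : Multiset (Fin n)),
    ∀ N ∈ (fAux b s i M).support, N.card ≤ M.card + 1 := by
  intro s
  induction s with
  | zero => intro i M N hN; simp [fAux] at hN
  | succ s IH =>
    intro i M N hN
    rw [fAux] at hN
    split at hN
    · rw [Finsupp.mem_support_single] at hN
      rw [hN.1]
      simp
    · rename_i hcond
      rcases hsort : M.sort (· ≤ ·) with _ | ⟨j, L⟩
      · rw [hsort] at hN; simp at hN
      · rw [hsort] at hN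
        simp only [] at hN
        obtain ⟨hjm, _⟩ := sort_head_min hsort
        have hcard : (M.erase j).card + 1 = M.card := Multiset.card_erase_add_one hjm
        have hN' := Finsupp.support_add hN
        rcases Finset.mem_union.mp hN' with hN1 | hN2
        · have := Finsupp.support_sum hN1
          rcases Finset.mem_biUnion.mp this with ⟨N', _, hmem⟩
          by_cases hc : N'.card ≤ M.card
          · rw [if_pos hc] at hmem
            have := Finsupp.support_smul hmem
            have := IH j N' N this
            omega
          · rw [if_neg hc] at hmem; simp at hmem
        · have := Finsupp.support_sum hN2
          rcases Finset.mem_biUnion.mp this with ⟨k, _, hmem⟩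
          have := Finsupp.support_smul hmem
          have := IH k (M.erase j) N this
          omega

lemma FF_support {i : Fin n} {M : Multiset (Fin n)} :
    ∀ N ∈ (FF b i M).support, N.card ≤ M.card + 1 :=
  fAux_support b _ i M

lemma FF_easy {i : Fin n} {M : Multiset (Fin n)} (h : ∀ j ∈ M, i ≤ j) :
    FF b i M = ee (i ::ₘ M) := by
  rw [FF, fAux, if_pos h]; rfl

lemma FF_hard {i : Fin n} {M : Multiset (Fin n)} (h : ¬ ∀ j ∈ M, i ≤ j)
    {j : Fin n} {L : List (Fin n)} (hsort : M.sort (· ≤ ·) = j :: L) :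
    FF b i M = AA b j (FF b i (M.erase j)) + rho b ⁅b i, b j⁆ (ee (M.erase j)) := by
  obtain ⟨hjm, hjmin⟩ := sort_head_min hsort
  have hji : j < i := by
    push_neg at h
    obtain ⟨k, hk, hik⟩ := h
    exact lt_of_le_of_lt (hjmin k hk) hik
  have hlt1 : rnk i (M.erase j) < rnk i M := rnk_erase_lt hjm
  rw [FF, fAux, if_neg (by push_neg; push_neg at h; exact h), hsort]
  simp only []
  congr 1
  · rw [fAux_eq_FF b hlt1]
    rw [AA_apply]
    apply Finsupp.sum_congr
    intro N hN
    have hNc : N.card ≤ M.card := by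
      have h1 := FF_support b N hN
      have h2 : (M.erase j).card + 1 = M.card := Multiset.card_erase_add_one hjm
      omega
    rw [if_pos hNc]
    have hlt : rnk j N < rnk i M := rnk_lt_of_card_le hNc hji
    rw [fAux_eq_FF b hlt]
  · rw [rho_ee]
    apply Finsupp.sum_congr
    intro k _
    have hlt : rnk k (M.erase j) < rnk i M := rnk_erase_lt hjm
    rw [fAux_eq_FF b hlt]

/-- Structure: `FF i M` is the expected top monomial plus lower-degree junk. -/
lemma FF_structure : ∀ (r : ℕ) (i : Fin n) (M : Multiset (Fin n)), rnk i M ≤ r →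
    ∃ q : PM n, FF b i M = ee (i ::ₘ M) + q ∧ ∀ N ∈ q.support, N.card ≤ M.card := by
  intro r
  induction r using Nat.strong_induction_on with
  | _ r IH =>
    intro i M hr
    by_cases h : ∀ j ∈ M, i ≤ j
    · exact ⟨0, by rw [FF_easy b h, add_zero], by simp⟩
    · rcases hsort : M.sort (· ≤ ·) with _ | ⟨j, L⟩
      · exfalso
        apply h
        have h0 : M = 0 := by
          have := Multiset.sort_eq M (· ≤ ·)
          rw [hsort] at this
          simpa using this.symm
        simp [h0]
      · obtain ⟨hjm, hjmin⟩ := sort_head_min hsort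
        have hji : j < i := by
          push_neg at h
          obtain ⟨k, hk, hik⟩ := h
          exact lt_of_le_of_lt (hjmin k hk) hik
        set M' := M.erase j with hM'
        have hcons : j ::ₘ M' = M := Multiset.cons_erase hjm
        have hcard : M'.card + 1 = M.card := Multiset.card_erase_add_one hjm
        have hlt1 : rnk i M' < rnk i M := rnk_erase_lt hjm
        obtain ⟨q', hq', hq's⟩ := IH (rnk i M') (by omega) i M' le_rfl
        rw [FF_hard b h hsort]
        rw [← hM', hq', map_add]
        have htop : AA b j (ee (i ::ₘ M')) = ee (i ::ₘ M) := by
          rw [AA_ee, FF_easy b ?hmin]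
          · congr 1
            rw [Multiset.cons_swap, hcons]
          · intro k hk
            rcases Multiset.mem_cons.mp hk with rfl | hk
            · exact le_of_lt hji
            · exact hjmin k (Multiset.mem_of_mem_erase hk)
        rw [htop]
        refine ⟨AA b j q' + rho b ⁅b i, b j⁆ (ee M'), by abel, ?_⟩
        intro N hN
        have hN' := Finsupp.support_add hN
        rcases Finset.mem_union.mp hN' with hN1 | hN2
        · rw [AA_apply] at hN1
          have := Finsupp.support_sum hN1
          rcases Finset.mem_biUnion.mp this with ⟨N', hN'mem, hmem⟩
          have h1 := Finsupp.support_smul hmem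
          have h2 := FF_support b N h1
          have h3 := hq's N' hN'mem
          omega
        · rw [rho_ee] at hN2
          have := Finsupp.support_sum hN2
          rcases Finset.mem_biUnion.mp this with ⟨k, _, hmem⟩
          have h1 := Finsupp.support_smul hmem
          have h2 := FF_support b N h1
          omega

/-- Case A of the PBW commutation relation: holds at all degrees, definitionally. -/
lemma caseA {i l : Fin n} (hli : l < i) {N : Multiset (Fin n)} (hN : ∀ k ∈ N, l ≤ k) :
    AA b i (AA b l (ee N)) - AA b l (AA b i (ee N)) = rho b ⁅b i, b l⁆ (ee N) := by
  have h1 : AA b l (ee N) = ee (l ::ₘ N) := by rw [AA_ee, FF_easy b hN]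
  have hnotall : ¬ ∀ k ∈ (l ::ₘ N), i ≤ k := by
    intro hc
    exact absurd (hc l (Multiset.mem_cons_self l N)) (not_le.mpr hli)
  have hne : (l ::ₘ N) ≠ 0 := by simp
  rcases hsort : (l ::ₘ N).sort (· ≤ ·) with _ | ⟨j, L⟩
  · exfalso; exact sort_ne_nil hne hsort
  · have hjl : j = l := by
      apply sort_head_eq hsort (Multiset.mem_cons_self l N)
      intro k hk
      rcases Multiset.mem_cons.mp hk with rfl | hk
      · exact le_refl _
      · exact hN k hk
    subst hjl
    have h2 := FF_hard b hnotall hsort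
    rw [Multiset.erase_cons_head] at h2
    rw [h1, AA_ee, h2, AA_ee]
    abel

/-- The commutator-defect operator. -/
noncomputable def Lop (x y : g) : PM n →ₗ[ℂ] PM n :=
  rho b x ∘ₗ rho b y - rho b y ∘ₗ rho b x - rho b ⁅x, y⁆

lemma comm_rule {x y : g} {p : PM n} (h : Lop b x y p = 0) :
    rho b x (rho b y p) = rho b y (rho b x p) + rho b ⁅x, y⁆ p := by
  rw [Lop] at h
  simp only [LinearMap.sub_apply, LinearMap.comp_apply] at h
  rw [sub_sub, sub_eq_zero] at h
  exact h

lemma rule_comm {x y : g} {p : PM n}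
    (h : rho b x (rho b y p) = rho b y (rho b x p) + rho b ⁅x, y⁆ p) :
    Lop b x y p = 0 := by
  rw [Lop]
  simp only [LinearMap.sub_apply, LinearMap.comp_apply]
  rw [sub_sub, sub_eq_zero]
  exact h

lemma apply_eq_zero (T : PM n →ₗ[ℂ] PM n) (p : PM n)
    (h : ∀ N ∈ p.support, T (ee N) = 0) : T p = 0 := by
  conv_lhs => rw [← Finsupp.sum_single p]
  rw [map_finsuppSum]
  apply Finset.sum_eq_zero
  intro N hN
  show T (Finsupp.single N (p N)) = 0
  have hs : Finsupp.single N (p N) = (p N) • ee N := by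
    simp [ee, Finsupp.smul_single]
  rw [hs, map_smul, h N hN, smul_zero]

/-- Bilinearisation: defect vanishing on basis vectors extends to all of `g`. -/
lemma Lop_zero_of_basis (p : PM n) (h : ∀ i j, Lop b (b i) (b j) p = 0) :
    ∀ x y : g, Lop b x y p = 0 := by
  have hK : (LinearMap.mk₂ ℂ (fun x y => Lop b x y p)
      (fun x x' y => by
        simp only [Lop, LinearMap.sub_apply, LinearMap.comp_apply, map_add, add_lie,
          LinearMap.add_apply]
        try abel)
      (fun c x y => by
        simp only [Lop, LinearMap.sub_apply, LinearMap.comp_apply, map_smul, smul_lie,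
          LinearMap.smul_apply, smul_sub]
        try abel)
      (fun x y y' => by
        simp only [Lop, LinearMap.sub_apply, LinearMap.comp_apply, map_add, lie_add,
          LinearMap.add_apply]
        try abel)
      (fun c x y => by
        simp only [Lop, LinearMap.sub_apply, LinearMap.comp_apply, map_smul, lie_smul,
          LinearMap.smul_apply, smul_sub]
        try abel)) = 0 := by
    apply b.ext
    intro i
    apply b.ext
    intro j
    simpa using h i j
  intro x y
  have h2 := LinearMap.congr_fun (LinearMap.congr_fun hK x) y
  simpa using h2

lemma comm_main : ∀ (d : ℕ) (M : Multiset (Fin n)), M.card < d →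
    ∀ i j : Fin n, Lop b (b i) (b j) (ee M) = 0 := by
  intro d
  induction d with
  | zero => intro M hM; exact absurd hM (Nat.not_lt_zero _)
  | succ d IH =>
    intro M hM i j
    have key : ∀ i j : Fin n, j < i → Lop b (b i) (b j) (ee M) = 0 := by
      intro i j hji
      by_cases hA : ∀ k ∈ M, j ≤ k
      · apply rule_comm
        have c := caseA b hji hA
        rw [← rho_basis b i, ← rho_basis b j, sub_eq_iff_eq_add] at c
        rw [c]
        abel
      · have hne : M ≠ 0 := by rintro rfl; exact hA (by simp)
        rcases hsort : M.sort (· ≤ ·) with _ | ⟨l, L⟩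
        · exact absurd hsort (sort_ne_nil hne)
        obtain ⟨hlm, hlmin⟩ := sort_head_min hsort
        have hlj : l < j := by
          push_neg at hA
          obtain ⟨k, hk, hjk⟩ := hA
          exact lt_of_le_of_lt (hlmin k hk) hjk
        have hli : l < i := hlj.trans hji
        set M' := M.erase l with hM'def
        have hcons : l ::ₘ M' = M := Multiset.cons_erase hlm
        have hcard : M'.card + 1 = M.card := Multiset.card_erase_add_one hlm
        have hminM' : ∀ k ∈ M', l ≤ k := fun k hk => hlmin k (Multiset.mem_of_mem_erase hk)
        set w : PM n := ee M' with hwdef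
        have IHp : ∀ (p : PM n), (∀ N ∈ p.support, N.card < M.card) →
            ∀ x y : g, Lop b x y p = 0 := by
          intro p hp x y
          refine Lop_zero_of_basis b p (fun i' j' => ?_) x y
          refine apply_eq_zero (Lop b (b i') (b j')) p (fun N hN => ?_)
          exact IH N (by have := hp N hN; omega) i' j'
        have hwsupp : ∀ N ∈ w.support, N.card < M.card := by
          intro N hN
          have hNM : N = M' := Finset.mem_singleton.mp (Finsupp.support_single_subset hN)
          subst hNM; omega
        have hwr : rho b (b l) w = ee M := by
          rw [hwdef, rho_basis, AA_ee, FF_easy b hminM', hcons]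
        obtain ⟨q', hq'eq, hq's⟩ := FF_structure b (rnk j M') j M' le_rfl
        have hXj : rho b (b j) w = ee (j ::ₘ M') + q' := by rw [hwdef, rho_basis, AA_ee, hq'eq]
        obtain ⟨p', hp'eq, hp's⟩ := FF_structure b (rnk i M') i M' le_rfl
        have hXi : rho b (b i) w = ee (i ::ₘ M') + p' := by rw [hwdef, rho_basis, AA_ee, hp'eq]
        have hq'low : ∀ N ∈ q'.support, N.card < M.card := fun N hN => by
          have := hq's N hN; omega
        have hp'low : ∀ N ∈ p'.support, N.card < M.card := fun N hN => by
          have := hp's N hN; omega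
        have commute_l : ∀ (a : Fin n), l < a → ∀ (X : PM n) (top : Multiset (Fin n)) (qq : PM n),
            X = ee top + qq → (∀ k ∈ top, l ≤ k) → (∀ N ∈ qq.support, N.card < M.card) →
            rho b (b a) (rho b (b l) X) =
              rho b (b l) (rho b (b a) X) + rho b ⁅b a, b l⁆ X := by
          intro a hla X top qq hX htop hqq
          have c1 := caseA b hla htop
          rw [← rho_basis b a, ← rho_basis b l, sub_eq_iff_eq_add] at c1
          have c2 := comm_rule b (IHp qq hqq (b a) (b l))
          rw [hX]
          simp only [map_add]
          rw [c1, c2]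
          abel
        have e1 : rho b (b j) (ee M) = rho b (b l) (rho b (b j) w) + rho b ⁅b j, b l⁆ w := by
          rw [← hwr]; exact comm_rule b (IHp w hwsupp (b j) (b l))
        have e1s : rho b (b i) (ee M) = rho b (b l) (rho b (b i) w) + rho b ⁅b i, b l⁆ w := by
          rw [← hwr]; exact comm_rule b (IHp w hwsupp (b i) (b l))
        have e2 : rho b (b i) (rho b (b l) (rho b (b j) w)) =
            rho b (b l) (rho b (b i) (rho b (b j) w)) + rho b ⁅b i, b l⁆ (rho b (b j) w) :=
          commute_l i hli _ _ _ hXj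
            (fun k hk => by
              rcases Multiset.mem_cons.mp hk with rfl | hk
              · exact le_of_lt hlj
              · exact hminM' k hk) hq'low
        have e2s : rho b (b j) (rho b (b l) (rho b (b i) w)) =
            rho b (b l) (rho b (b j) (rho b (b i) w)) + rho b ⁅b j, b l⁆ (rho b (b i) w) :=
          commute_l j hlj _ _ _ hXi
            (fun k hk => by
              rcases Multiset.mem_cons.mp hk with rfl | hk
              · exact le_of_lt hli
              · exact hminM' k hk) hp'low
        have e3 : rho b (b i) (rho b ⁅b j, b l⁆ w) =
            rho b ⁅b j, b l⁆ (rho b (b i) w) + rho b ⁅b i, ⁅b j, b l⁆⁆ w :=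
          comm_rule b (IHp w hwsupp (b i) ⁅b j, b l⁆)
        have e3s : rho b (b j) (rho b ⁅b i, b l⁆ w) =
            rho b ⁅b i, b l⁆ (rho b (b j) w) + rho b ⁅b j, ⁅b i, b l⁆⁆ w :=
          comm_rule b (IHp w hwsupp (b j) ⁅b i, b l⁆)
        have e5 : rho b (b i) (rho b (b j) w) =
            rho b (b j) (rho b (b i) w) + rho b ⁅b i, b j⁆ w :=
          comm_rule b (IHp w hwsupp (b i) (b j))
        have e4 : rho b ⁅b i, b j⁆ (ee M) =
            rho b (b l) (rho b ⁅b i, b j⁆ w) + rho b ⁅⁅b i, b j⁆, b l⁆ w := by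
          rw [← hwr]; exact comm_rule b (IHp w hwsupp ⁅b i, b j⁆ (b l))
        have hjac : rho b ⁅b i, ⁅b j, b l⁆⁆ w =
            rho b ⁅⁅b i, b j⁆, b l⁆ w + rho b ⁅b j, ⁅b i, b l⁆⁆ w := by
          rw [leibniz_lie (b i) (b j) (b l), map_add, LinearMap.add_apply]
        apply rule_comm
        calc rho b (b i) (rho b (b j) (ee M))
            = rho b (b i) (rho b (b l) (rho b (b j) w)) + rho b (b i) (rho b ⁅b j, b l⁆ w) := by
              rw [e1, map_add]
          _ = rho b (b l) (rho b (b i) (rho b (b j) w)) + rho b ⁅b i, b l⁆ (rho b (b j) w)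
              + (rho b ⁅b j, b l⁆ (rho b (b i) w) + rho b ⁅b i, ⁅b j, b l⁆⁆ w) := by
              rw [e2, e3]
          _ = rho b (b l) (rho b (b j) (rho b (b i) w)) + rho b (b l) (rho b ⁅b i, b j⁆ w)
              + rho b ⁅b i, b l⁆ (rho b (b j) w)
              + rho b ⁅b j, b l⁆ (rho b (b i) w) + rho b ⁅b i, ⁅b j, b l⁆⁆ w := by
              rw [e5, map_add]; abel
          _ = rho b (b j) (rho b (b i) (ee M)) + rho b ⁅b i, b j⁆ (ee M) := by
              rw [e1s, map_add, e2s, e3s, e4, hjac]; abel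
    rcases lt_trichotomy i j with hij | rfl | hji
    · have hk := key j i hij
      rw [Lop] at hk ⊢
      simp only [LinearMap.sub_apply, LinearMap.comp_apply] at hk ⊢
      have hsk : ⁅b i, b j⁆ = -⁅b j, b i⁆ := by rw [← lie_skew]
      rw [hsk, map_neg, LinearMap.neg_apply, sub_neg_eq_add]
      have h2 : ∀ X Y Z : PM n, X - Y + Z = -(Y - X - Z) := by intro X Y Z; abel
      rw [h2, hk, neg_zero]
    · simp [Lop, lie_self]
    · exact key i j hji

lemma Lop_zero (x y : g) (p : PM n) : Lop b x y p = 0 := by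
  refine Lop_zero_of_basis b p (fun i j => ?_) x y
  refine apply_eq_zero (Lop b (b i) (b j)) p (fun N hN => ?_)
  exact comm_main b (N.card + 1) N (Nat.lt_succ_self _) i j

section RhoLieSec

attribute [local instance] LieRing.ofAssociativeRing

/-- The PBW representation as a morphism of Lie algebras. -/
noncomputable def rhoLie : g →ₗ⁅ℂ⁆ Module.End ℂ (PM n) :=
  { rho b with
    map_lie' := by
      intro x y
      apply LinearMap.ext
      intro p
      have h := comm_rule b (Lop_zero b x y p)
      simp only [Ring.lie_def, LinearMap.sub_apply, Module.End.mul_apply,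
        LinearMap.coe_mk, AddHom.coe_mk]
      show (rho b) ⁅x, y⁆ p = (rho b) x ((rho b) y p) - (rho b) y ((rho b) x p)
      rw [h]
      abel }

end RhoLieSec

lemma rho_ee_zero (x : g) : rho b x (ee (0 : Multiset (Fin n))) =
    (b.repr x).sum fun k c => c • ee ({k} : Multiset (Fin n)) := by
  rw [rho_ee]
  apply Finsupp.sum_congr
  intro k _
  rw [FF_easy b (by simp)]
  rw [Multiset.cons_zero]

noncomputable def tval : Multiset (Fin n) → g := fun M =>
  if h : ∃ i : Fin n, M = {i} then b h.choose else 0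

lemma tval_single (i : Fin n) : tval b ({i} : Multiset (Fin n)) = b i := by
  rw [tval, dif_pos ⟨i, rfl⟩]
  congr 1
  have h := (⟨i, rfl⟩ : ∃ j : Fin n, ({i} : Multiset (Fin n)) = {j}).choose_spec
  exact (Multiset.singleton_inj.mp h).symm

/-- The key consequence of PBW: `ι : g → U(g)` admits a linear retraction. -/
theorem exists_retraction (g : Type*) [LieRing g] [LieAlgebra ℂ g] [Module.Finite ℂ g] :
    ∃ π : UniversalEnvelopingAlgebra ℂ g →ₗ[ℂ] g,
      ∀ x : g, π (UniversalEnvelopingAlgebra.ι ℂ x) = x := by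
  set n := Module.finrank ℂ g with hn
  let b : Module.Basis (Fin n) ℂ g := Module.finBasis ℂ g
  let φ := UniversalEnvelopingAlgebra.lift ℂ (rhoLie b)
  let θ : UniversalEnvelopingAlgebra ℂ g →ₗ[ℂ] PM n :=
    (LinearMap.applyₗ (ee (0 : Multiset (Fin n)))).comp φ.toLinearMap
  let t : PM n →ₗ[ℂ] g := Finsupp.linearCombination ℂ (tval b)
  refine ⟨t.comp θ, fun x => ?_⟩
  have h1 : φ (UniversalEnvelopingAlgebra.ι ℂ x) = rho b x := by
    simp [φ, UniversalEnvelopingAlgebra.lift_ι_apply]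
    rfl
  have h2 : θ (UniversalEnvelopingAlgebra.ι ℂ x) = rho b x (ee 0) := by
    simp only [θ, LinearMap.comp_apply, AlgHom.toLinearMap_apply, h1, LinearMap.applyₗ]
    rfl
  rw [LinearMap.comp_apply, h2, rho_ee_zero, map_finsuppSum]
  have h3 : ∀ k : Fin n, ∀ c : ℂ, t (c • ee ({k} : Multiset (Fin n))) = c • b k := by
    intro k c
    rw [map_smul]
    congr 1
    show Finsupp.linearCombination ℂ (tval b) (Finsupp.single ({k} : Multiset (Fin n)) 1) = b k
    rw [Finsupp.linearCombination_single, one_smul, tval_single]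
  calc ((b.repr x).sum fun k c => t (c • ee ({k} : Multiset (Fin n))))
      = (b.repr x).sum fun k c => c • b k := Finsupp.sum_congr fun k _ => h3 k _
    _ = x := by rw [← Finsupp.linearCombination_apply, Module.Basis.linearCombination_repr]


end PBWlite



namespace Stmt6

variable {g : Type*} [LieRing g] [LieAlgebra ℂ g]

attribute [local instance] LieRing.ofAssociativeRing

-- Auxiliary lemmas

lemma rTilde_tmul (a c : g) (ξ : Module.Dual ℂ g) : rTilde (a ⊗ₜ c) ξ = ξ a • c := by
  simp [rTilde]

lemma rTilde_zero (ξ : Module.Dual ℂ g) : rTilde (0 : g ⊗[ℂ] g) ξ = 0 := by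
  simp [rTilde]

lemma rTilde_add (r s : g ⊗[ℂ] g) (ξ : Module.Dual ℂ g) :
    rTilde (r + s) ξ = rTilde r ξ + rTilde s ξ := by
  simp [rTilde, map_add]

lemma rTilde_neg (r : g ⊗[ℂ] g) (ξ : Module.Dual ℂ g) :
    rTilde (-r) ξ = -rTilde r ξ := by
  simp [rTilde, map_neg]

lemma rTilde_dual_add (r : g ⊗[ℂ] g) (ξ η : Module.Dual ℂ g) :
    rTilde r (ξ + η) = rTilde r ξ + rTilde r η := by
  induction r using TensorProduct.induction_on with
  | zero => simp [rTilde_zero]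
  | tmul a c => simp [rTilde_tmul, add_smul]
  | add u v hu hv => rw [rTilde_add, rTilde_add, rTilde_add, hu, hv]; abel

lemma rTilde_dual_neg (r : g ⊗[ℂ] g) (ξ : Module.Dual ℂ g) :
    rTilde r (-ξ) = -rTilde r ξ := by
  induction r using TensorProduct.induction_on with
  | zero => simp [rTilde_zero]
  | tmul a c => simp [rTilde_tmul]
  | add u v hu hv => rw [rTilde_add, rTilde_add, hu, hv]; abel

lemma rTilde_dual_sub (r : g ⊗[ℂ] g) (ξ η : Module.Dual ℂ g) :
    rTilde r (ξ - η) = rTilde r ξ - rTilde r η := by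
  rw [sub_eq_add_neg, rTilde_dual_add, rTilde_dual_neg, sub_eq_add_neg]

section Extraction

local notation "U" => UniversalEnvelopingAlgebra ℂ g
local notation "ι" => (UniversalEnvelopingAlgebra.ι ℂ : g →ₗ⁅ℂ⁆ UniversalEnvelopingAlgebra ℂ g)

lemma legMap_tmul (f f' : g →ₗ[ℂ] U3 g) (a c : g) :
    legMap f f' (a ⊗ₜ c) = f a * f' c := by
  simp [legMap, TensorProduct.lift.tmul]

lemma j1_apply (a : g) : j1 a = ι a ⊗ₜ[ℂ] ((1 : U) ⊗ₜ[ℂ] (1 : U)) := rfl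
lemma j2_apply (a : g) : j2 a = (1 : U) ⊗ₜ[ℂ] (ι a ⊗ₜ[ℂ] (1 : U)) := rfl
lemma j3_apply (a : g) : j3 a = (1 : U) ⊗ₜ[ℂ] ((1 : U) ⊗ₜ[ℂ] ι a) := rfl

lemma iota_comm (a c : g) : ι a * ι c - ι c * ι a = ι ⁅a, c⁆ := by
  rw [LieHom.map_lie]
  rw [Ring.lie_def]

variable (π : UniversalEnvelopingAlgebra ℂ g →ₗ[ℂ] g)
variable (ξ η : Module.Dual ℂ g)

/-- The extraction map `U ⊗ U ⊗ U → g`, `u ⊗ v ⊗ w ↦ ξ(π u) • (η(π v) • π w)`. -/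
noncomputable def Phi : U3 g →ₗ[ℂ] g :=
  TensorProduct.lift (((LinearMap.lsmul ℂ g).comp (ξ.comp π)).compl₂
    (TensorProduct.lift (((LinearMap.lsmul ℂ g).comp (η.comp π)).compl₂ π)))

lemma Phi_tmul (u v w : UniversalEnvelopingAlgebra ℂ g) :
    Phi π ξ η (u ⊗ₜ (v ⊗ₜ w)) = ξ (π u) • (η (π v) • π w) := by
  simp [Phi, TensorProduct.lift.tmul]
  rw [smul_comm]

lemma rTilde_dual_zero (r : g ⊗[ℂ] g) : rTilde r (0 : Module.Dual ℂ g) = 0 := by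
  induction r using TensorProduct.induction_on with
  | zero => simp [rTilde_zero]
  | tmul a c => simp [rTilde_tmul]
  | add u v hu hv => rw [rTilde_add, hu, hv, add_zero]

variable {π} {ξ η} in
lemma T2_eq (hπ : ∀ x : g, π ((UniversalEnvelopingAlgebra.ι ℂ : g →ₗ⁅ℂ⁆ _) x) = x)
    (r r' : g ⊗[ℂ] g) :
    Phi π ξ η ⁅legMap j1 j2 r, legMap j2 j3 r'⁆ =
      rTilde r' (η.comp (LieAlgebra.ad ℂ g (rTilde r ξ) : g →ₗ[ℂ] g)) := by
  induction r using TensorProduct.induction_on with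
  | zero =>
      rw [map_zero, Ring.lie_def, zero_mul, mul_zero, sub_zero, map_zero, rTilde_zero,
        map_zero]
      rw [show ((0 : Module.End ℂ g) : g →ₗ[ℂ] g) = 0 from rfl, LinearMap.comp_zero,
        rTilde_dual_zero]
  | add u v hu hv =>
      rw [Ring.lie_def] at hu hv ⊢
      simp only [map_add, add_mul, mul_add, map_sub] at hu hv ⊢
      rw [rTilde_add, map_add]
      rw [show ((LieAlgebra.ad ℂ g (rTilde u ξ) + LieAlgebra.ad ℂ g (rTilde v ξ) :
            Module.End ℂ g) : g →ₗ[ℂ] g) =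
          (LieAlgebra.ad ℂ g (rTilde u ξ) : g →ₗ[ℂ] g) +
            (LieAlgebra.ad ℂ g (rTilde v ξ) : g →ₗ[ℂ] g) from rfl]
      rw [LinearMap.comp_add, rTilde_dual_add, ← hu, ← hv]
      abel
  | tmul a bb =>
      induction r' using TensorProduct.induction_on with
      | zero => rw [map_zero, Ring.lie_def, zero_mul, mul_zero, zero_sub, neg_zero, map_zero,
          rTilde_zero]
      | add u v hu hv =>
          rw [Ring.lie_def] at hu hv ⊢
          simp only [map_add, add_mul, mul_add, map_sub] at hu hv ⊢
          rw [rTilde_add, ← hu, ← hv]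
          abel
      | tmul c d =>
          rw [legMap_tmul, legMap_tmul, j1_apply, j2_apply, j2_apply, j3_apply]
          rw [Ring.lie_def]
          simp only [Algebra.TensorProduct.tmul_mul_tmul, one_mul, mul_one]
          rw [map_sub, Phi_tmul, Phi_tmul]
          rw [← smul_sub, ← sub_smul, ← map_sub η, ← map_sub π, iota_comm, hπ, hπ, hπ]
          rw [rTilde_tmul, rTilde_tmul]
          rw [LinearMap.comp_apply]
          simp only [LieAlgebra.ad_apply]
          rw [smul_lie, map_smul]
          rw [smul_smul, smul_eq_mul]

variable {π} {ξ η} in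
lemma T1_eq (hπ : ∀ x : g, π ((UniversalEnvelopingAlgebra.ι ℂ : g →ₗ⁅ℂ⁆ _) x) = x)
    (r r' : g ⊗[ℂ] g) :
    Phi π ξ η ⁅legMap j1 j2 r, legMap j1 j3 r'⁆ =
      rTilde r' (ξ.comp (LieAlgebra.ad ℂ g (rTilde (TensorProduct.comm ℂ g g r) η) :
        g →ₗ[ℂ] g)) := by
  induction r using TensorProduct.induction_on with
  | zero =>
      rw [map_zero, Ring.lie_def, zero_mul, mul_zero, sub_zero, map_zero, map_zero, rTilde_zero,
        map_zero]
      rw [show ((0 : Module.End ℂ g) : g →ₗ[ℂ] g) = 0 from rfl, LinearMap.comp_zero,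
        rTilde_dual_zero]
  | add u v hu hv =>
      rw [Ring.lie_def] at hu hv ⊢
      simp only [map_add, add_mul, mul_add, map_sub] at hu hv ⊢
      rw [rTilde_add, map_add]
      rw [show ((LieAlgebra.ad ℂ g (rTilde (TensorProduct.comm ℂ g g u) η)
            + LieAlgebra.ad ℂ g (rTilde (TensorProduct.comm ℂ g g v) η) :
            Module.End ℂ g) : g →ₗ[ℂ] g) =
          (LieAlgebra.ad ℂ g (rTilde (TensorProduct.comm ℂ g g u) η) : g →ₗ[ℂ] g) +
            (LieAlgebra.ad ℂ g (rTilde (TensorProduct.comm ℂ g g v) η) : g →ₗ[ℂ] g) from rfl]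
      rw [LinearMap.comp_add, rTilde_dual_add, ← hu, ← hv]
      abel
  | tmul a bb =>
      induction r' using TensorProduct.induction_on with
      | zero => rw [map_zero, Ring.lie_def, zero_mul, mul_zero, zero_sub, neg_zero, map_zero,
          rTilde_zero]
      | add u v hu hv =>
          rw [Ring.lie_def] at hu hv ⊢
          simp only [map_add, add_mul, mul_add, map_sub] at hu hv ⊢
          rw [rTilde_add, ← hu, ← hv]
          abel
      | tmul c d =>
          rw [legMap_tmul, legMap_tmul, j1_apply, j2_apply, j1_apply, j3_apply]
          rw [Ring.lie_def]
          simp only [Algebra.TensorProduct.tmul_mul_tmul, one_mul, mul_one]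
          rw [map_sub, Phi_tmul, Phi_tmul]
          rw [← sub_smul, ← map_sub ξ, ← map_sub π, iota_comm, hπ, hπ, hπ]
          rw [TensorProduct.comm_tmul, rTilde_tmul, rTilde_tmul]
          rw [LinearMap.comp_apply]
          simp only [LieAlgebra.ad_apply]
          rw [smul_lie, map_smul, smul_smul, smul_eq_mul, mul_comm]

variable {π} {ξ η} in
lemma T3_eq (hπ : ∀ x : g, π ((UniversalEnvelopingAlgebra.ι ℂ : g →ₗ⁅ℂ⁆ _) x) = x)
    (r r' : g ⊗[ℂ] g) :
    Phi π ξ η ⁅legMap j1 j3 r, legMap j2 j3 r'⁆ = ⁅rTilde r ξ, rTilde r' η⁆ := by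
  induction r using TensorProduct.induction_on with
  | zero =>
      rw [map_zero, Ring.lie_def, zero_mul, mul_zero, sub_zero, map_zero, rTilde_zero, zero_lie]
  | add u v hu hv =>
      rw [Ring.lie_def] at hu hv ⊢
      simp only [map_add, add_mul, mul_add, map_sub] at hu hv ⊢
      rw [rTilde_add, add_lie, ← hu, ← hv]
      abel
  | tmul a bb =>
      induction r' using TensorProduct.induction_on with
      | zero => rw [map_zero, Ring.lie_def, zero_mul, mul_zero, zero_sub, neg_zero, map_zero,
          rTilde_zero, lie_zero]
      | add u v hu hv =>
          rw [Ring.lie_def] at hu hv ⊢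
          simp only [map_add, add_mul, mul_add, map_sub] at hu hv ⊢
          rw [rTilde_add, lie_add, ← hu, ← hv]
          abel
      | tmul c d =>
          rw [legMap_tmul, legMap_tmul, j1_apply, j3_apply, j2_apply, j3_apply]
          rw [Ring.lie_def]
          simp only [Algebra.TensorProduct.tmul_mul_tmul, one_mul, mul_one]
          rw [map_sub, Phi_tmul, Phi_tmul]
          rw [← smul_sub, ← smul_sub, ← map_sub π, iota_comm, hπ, hπ, hπ]
          rw [rTilde_tmul, rTilde_tmul]
          rw [smul_lie, lie_smul]

end Extraction

/-- Let `g` be a finite-dimensional Lie algebra over ℂ and `r ∈ g ⊗ g` a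
skew-symmetric solution of the classical Yang–Baxter equation
`[r₁₂, r₁₃] + [r₁₂, r₂₃] + [r₁₃, r₂₃] = 0` (in `U(g)^{⊗3}`). Then the image of `r`,
regarded as a linear map `g* → g`, is a Lie subalgebra of `g`. -/
theorem stmt6 [Module.Finite ℂ g] (r : g ⊗[ℂ] g)
    (hskew : TensorProduct.comm ℂ g g r = -r) (hCYBE : CYBE r) :
    ∀ ξ η : Module.Dual ℂ g, ∃ ζ : Module.Dual ℂ g,
      ⁅rTilde r ξ, rTilde r η⁆ = rTilde r ζ := by
  intro ξ η
  obtain ⟨π, hπ⟩ := PBWlite.exists_retraction g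
  refine ⟨(ξ.comp (LieAlgebra.ad ℂ g (rTilde r η) : g →ₗ[ℂ] g))
    - (η.comp (LieAlgebra.ad ℂ g (rTilde r ξ) : g →ₗ[ℂ] g)), ?_⟩
  have h0 : Phi π ξ η (⁅r12 r, r13 r⁆ + ⁅r12 r, r23 r⁆ + ⁅r13 r, r23 r⁆) = 0 := by
    rw [hCYBE, map_zero]
  rw [map_add, map_add] at h0
  simp only [r12, r13, r23] at h0
  rw [T1_eq hπ r r, T2_eq hπ r r, T3_eq hπ r r] at h0
  rw [hskew, rTilde_neg, map_neg] at h0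
  rw [show ξ.comp ((-(LieAlgebra.ad ℂ g (rTilde r η)) : Module.End ℂ g) : g →ₗ[ℂ] g) =
      -(ξ.comp (LieAlgebra.ad ℂ g (rTilde r η) : g →ₗ[ℂ] g)) from
    LinearMap.comp_neg _ _] at h0
  rw [rTilde_dual_neg] at h0
  rw [rTilde_dual_sub]
  have habel : ∀ (X Y C : g), -X + Y + C = 0 → C = X - Y := by
    intro X Y C h
    have h1 : C = -(-X + Y) := eq_neg_of_add_eq_zero_right h
    rw [h1, neg_add, neg_neg, ← sub_eq_add_neg]
  exact habel _ _ _ h0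


end Stmt6
end
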